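/- The space H_Ω of fibrewise Hamiltonian functions is closed under the bracket {F,G}_Ω = π^{ij} a_i b_j (where ∂F/∂ξ_i = π^{ij} a_j and ∂G/∂ξ_i = π^{ij} b_j), and this bracket is well-defined (independent of the choice of Hamiltonian potentials a, b) and satisfies {F,G}_Ω = a_i ∂G/∂ξ_i = −b_i ∂F/∂ξ_i. -/

import Mathlib

/-- Partial derivative in the fibre (`ξ`) direction, `p = (x, ξ)`. -/
noncomputable def pdxi {n : ℕ} (k : Fin n)
    (f : (Fin n → ℝ) × (Fin n → ℝ) → ℝ) (p : (Fin n → ℝ) × (Fin n → ℝ)) : ℝ :=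
  fderiv ℝ f p (0, Pi.single k 1)

variable {n : ℕ}

local notation "E" => (Fin n → ℝ) × (Fin n → ℝ)

lemma pdxi_sum {ι : Type*} (k : Fin n) (s : Finset ι) (f : ι → ((Fin n → ℝ) × (Fin n → ℝ)) → ℝ)
    (p : (Fin n → ℝ) × (Fin n → ℝ)) (h : ∀ i ∈ s, DifferentiableAt ℝ (f i) p) :
    pdxi k (fun q => ∑ i ∈ s, f i q) p = ∑ i ∈ s, pdxi k (f i) p := by
  unfold pdxi
  rw [fderiv_fun_sum h]
  simp

lemma pdxi_mul (k : Fin n) (f g : ((Fin n → ℝ) × (Fin n → ℝ)) → ℝ)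
    (p : (Fin n → ℝ) × (Fin n → ℝ)) (hf : DifferentiableAt ℝ f p) (hg : DifferentiableAt ℝ g p) :
    pdxi k (fun q => f q * g q) p = pdxi k f p * g p + f p * pdxi k g p := by
  unfold pdxi
  rw [fderiv_fun_mul hf hg]
  simp [mul_comm]
  ring

lemma pdxi_fst (k : Fin n) (φ : (Fin n → ℝ) → ℝ) (p : (Fin n → ℝ) × (Fin n → ℝ))
    (hφ : DifferentiableAt ℝ φ p.1) :
    pdxi k (fun q => φ q.1) p = 0 := by
  unfold pdxi
  have : fderiv ℝ (fun q : (Fin n → ℝ) × (Fin n → ℝ) => φ q.1) p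
      = (fderiv ℝ φ p.1).comp (ContinuousLinearMap.fst ℝ (Fin n → ℝ) (Fin n → ℝ)) := by
    exact (hφ.hasFDerivAt.comp p hasFDerivAt_fst).fderiv
  rw [this]
  simp

lemma pdxi_swap (k i : Fin n) (H : ((Fin n → ℝ) × (Fin n → ℝ)) → ℝ)
    (hH : ContDiff ℝ (⊤ : ℕ∞) H) (p : (Fin n → ℝ) × (Fin n → ℝ)) :
    pdxi k (fun q => pdxi i H q) p = pdxi i (fun q => pdxi k H q) p := by
  have hd : DifferentiableAt ℝ (fderiv ℝ H) p := by
    have h2 : ContDiff ℝ (⊤ : ℕ∞) (fderiv ℝ H) := hH.fderiv_right le_rfl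
    exact h2.differentiable (by norm_cast) p
  have h1 : ∀ v : (Fin n → ℝ) × (Fin n → ℝ),
      fderiv ℝ (fun q => fderiv ℝ H q v) p = (fderiv ℝ (fderiv ℝ H) p).flip v := by
    intro v
    have := fderiv_clm_apply (c := fderiv ℝ H)
      (u := fun _ : (Fin n → ℝ) × (Fin n → ℝ) => v) hd (differentiableAt_const v)
    simpa using this
  have hsymm : IsSymmSndFDerivAt ℝ H p := by
    exact ContDiffAt.isSymmSndFDerivAt hH.contDiffAt (by rw [minSmoothness_of_isRCLikeNormedField]; norm_cast)
  unfold pdxi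
  rw [h1, h1]
  simpa using hsymm.eq _ _
set_option maxHeartbeats 1000000 in
/-- The bracket `{F,G}_Ω = π^{ij} a_i b_j` on the space `H_Ω` of fibrewise Hamiltonian
functions is well-defined (independent of the choice of the Hamiltonian potentials),
satisfies `{F,G}_Ω = a_i ∂G/∂ξ_i = −b_i ∂F/∂ξ_i`, and `H_Ω` is closed under it. -/
theorem hamiltonian_bracket_well_defined_and_closed
    (n : ℕ) (π : Fin n → Fin n → (Fin n → ℝ) → ℝ)
    (hπ : ∀ i j, ContDiff ℝ (⊤ : ℕ∞) (π i j))
    (hanti : ∀ i j (x : Fin n → ℝ), π i j x = -π j i x)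
    (F G : (Fin n → ℝ) × (Fin n → ℝ) → ℝ)
    (a b a' b' : Fin n → (Fin n → ℝ) × (Fin n → ℝ) → ℝ)
    (hF : ContDiff ℝ (⊤ : ℕ∞) F) (hG : ContDiff ℝ (⊤ : ℕ∞) G)
    (ha : ∀ i, ContDiff ℝ (⊤ : ℕ∞) (a i)) (hb : ∀ i, ContDiff ℝ (⊤ : ℕ∞) (b i))
    (hFa : ∀ i p, pdxi i F p = ∑ j, π i j p.1 * a j p)
    (hGb : ∀ i p, pdxi i G p = ∑ j, π i j p.1 * b j p)
    (hFa' : ∀ i p, pdxi i F p = ∑ j, π i j p.1 * a' j p)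
    (hGb' : ∀ i p, pdxi i G p = ∑ j, π i j p.1 * b' j p) :
    (∀ p : (Fin n → ℝ) × (Fin n → ℝ),
        ∑ i, ∑ j, π i j p.1 * a i p * b j p = ∑ i, ∑ j, π i j p.1 * a' i p * b' j p)
    ∧ (∀ p : (Fin n → ℝ) × (Fin n → ℝ),
        ∑ i, ∑ j, π i j p.1 * a i p * b j p = ∑ i, a i p * pdxi i G p)
    ∧ (∀ p : (Fin n → ℝ) × (Fin n → ℝ),
        ∑ i, ∑ j, π i j p.1 * a i p * b j p = -∑ i, b i p * pdxi i F p)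
    ∧ (∃ c : Fin n → (Fin n → ℝ) × (Fin n → ℝ) → ℝ,
        ∀ k (p : (Fin n → ℝ) × (Fin n → ℝ)),
          pdxi k (fun q => ∑ i, ∑ j, π i j q.1 * a i q * b j q) p
            = ∑ j, π k j p.1 * c j p) := by
  -- purely algebraic identities
  have alg1 : ∀ (x : Fin n → ℝ) (u v w : Fin n → ℝ),
      (∀ i, w i = ∑ j, π i j x * v j) →
      ∑ i, ∑ j, π i j x * u i * v j = ∑ i, u i * w i := by
    intro x u v w hw
    refine Finset.sum_congr rfl fun i _ => ?_
    rw [hw i, Finset.mul_sum]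
    exact Finset.sum_congr rfl fun j _ => by ring
  have alg2 : ∀ (x : Fin n → ℝ) (u v w : Fin n → ℝ),
      (∀ j, w j = ∑ i, π j i x * u i) →
      ∑ i, ∑ j, π i j x * u i * v j = -∑ j, v j * w j := by
    intro x u v w hw
    rw [Finset.sum_comm, ← Finset.sum_neg_distrib]
    refine Finset.sum_congr rfl fun j _ => ?_
    rw [hw j, Finset.mul_sum, ← Finset.sum_neg_distrib]
    refine Finset.sum_congr rfl fun i _ => ?_
    rw [hanti i j x]; ring
  refine ⟨?_, ?_, ?_, ?_⟩
  · intro p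
    calc ∑ i, ∑ j, π i j p.1 * a i p * b j p
        = ∑ i, a i p * pdxi i G p :=
          alg1 p.1 (fun i => a i p) (fun j => b j p) (fun i => pdxi i G p)
            (fun i => hGb i p)
      _ = ∑ i, ∑ j, π i j p.1 * a i p * b' j p :=
          (alg1 p.1 (fun i => a i p) (fun j => b' j p) (fun i => pdxi i G p)
            (fun i => hGb' i p)).symm
      _ = -∑ j, b' j p * pdxi j F p :=
          alg2 p.1 (fun i => a i p) (fun j => b' j p) (fun j => pdxi j F p)
            (fun j => hFa j p)
      _ = ∑ i, ∑ j, π i j p.1 * a' i p * b' j p :=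
          (alg2 p.1 (fun i => a' i p) (fun j => b' j p) (fun j => pdxi j F p)
            (fun j => hFa' j p)).symm
  · intro p
    exact alg1 p.1 (fun i => a i p) (fun j => b j p) (fun i => pdxi i G p)
      (fun i => hGb i p)
  · intro p
    exact alg2 p.1 (fun i => a i p) (fun j => b j p) (fun j => pdxi j F p)
      (fun j => hFa j p)
  · -- closedness
    have hone : ((⊤ : ℕ∞) : WithTop ℕ∞) ≠ 0 := by simp
    have dπ : ∀ i j (p : (Fin n → ℝ) × (Fin n → ℝ)),
        DifferentiableAt ℝ (fun q : (Fin n → ℝ) × (Fin n → ℝ) => π i j q.1) p :=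
      fun i j p => ((hπ i j).comp contDiff_fst).differentiable hone p
    have da : ∀ i p, DifferentiableAt ℝ (a i) p := fun i p => (ha i).differentiable hone p
    have db : ∀ i p, DifferentiableAt ℝ (b i) p := fun i p => (hb i).differentiable hone p
    -- derivative of a "Hamiltonian sum"
    have stepA : ∀ (u : Fin n → (Fin n → ℝ) × (Fin n → ℝ) → ℝ),
        (∀ i p, DifferentiableAt ℝ (u i) p) → ∀ i k p,
        pdxi k (fun q => ∑ j, π i j q.1 * u j q) p = ∑ j, π i j p.1 * pdxi k (u j) p := by
      intro u du i k p
      rw [pdxi_sum k Finset.univ _ p (fun j _ => (dπ i j p).fun_mul (du j p))]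
      refine Finset.sum_congr rfl fun j _ => ?_
      rw [pdxi_mul k _ _ p (dπ i j p) (du j p),
        pdxi_fst k (π i j) p ((hπ i j).differentiable hone p.1)]
      ring
    have hG2 : ∀ i k p, pdxi k (fun q => pdxi i G q) p = ∑ j, π i j p.1 * pdxi k (b j) p := by
      intro i k p
      have he : (fun q => pdxi i G q) = fun q => ∑ j, π i j q.1 * b j q := funext (hGb i)
      rw [he, stepA b db i k p]
    have hF2 : ∀ i k p, pdxi k (fun q => pdxi i F q) p = ∑ j, π i j p.1 * pdxi k (a j) p := by
      intro i k p
      have he : (fun q => pdxi i F q) = fun q => ∑ j, π i j q.1 * a j q := funext (hFa i)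
      rw [he, stepA a da i k p]
    refine ⟨fun j q => ∑ i, (a i q * pdxi i (b j) q - b i q * pdxi i (a j) q), ?_⟩
    intro k p
    have hGkey : ∀ i, ∑ j, π i j p.1 * pdxi k (b j) p = ∑ j, π k j p.1 * pdxi i (b j) p := by
      intro i
      rw [← hG2 i k p, ← hG2 k i p]
      exact pdxi_swap k i G hG p
    have hFkey : ∀ j, ∑ i, π j i p.1 * pdxi k (a i) p = ∑ i, π k i p.1 * pdxi j (a i) p := by
      intro j
      rw [← hF2 j k p, ← hF2 k j p]
      exact pdxi_swap k j F hF p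
    -- expand the derivative of the bracket
    have hB : pdxi k (fun q => ∑ i, ∑ j, π i j q.1 * a i q * b j q) p
        = ∑ i, ∑ j, (π i j p.1 * pdxi k (a i) p * b j p
            + π i j p.1 * a i p * pdxi k (b j) p) := by
      rw [pdxi_sum k Finset.univ _ p (fun i _ =>
        DifferentiableAt.fun_sum (fun j _ => ((dπ i j p).fun_mul (da i p)).fun_mul (db j p)))]
      refine Finset.sum_congr rfl fun i _ => ?_
      rw [pdxi_sum k Finset.univ _ p (fun j _ => ((dπ i j p).fun_mul (da i p)).fun_mul (db j p))]
      refine Finset.sum_congr rfl fun j _ => ?_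
      rw [pdxi_mul k _ _ p ((dπ i j p).fun_mul (da i p)) (db j p),
        pdxi_mul k _ _ p (dπ i j p) (da i p),
        pdxi_fst k (π i j) p ((hπ i j).differentiable hone p.1)]
      ring
    rw [hB]
    have hsplit : ∑ i, ∑ j, (π i j p.1 * pdxi k (a i) p * b j p
            + π i j p.1 * a i p * pdxi k (b j) p)
        = (∑ i, ∑ j, π i j p.1 * pdxi k (a i) p * b j p)
          + ∑ i, ∑ j, π i j p.1 * a i p * pdxi k (b j) p := by
      rw [← Finset.sum_add_distrib]
      exact Finset.sum_congr rfl fun i _ => by rw [← Finset.sum_add_distrib]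
    rw [hsplit]
    have hT2 : ∑ i, ∑ j, π i j p.1 * a i p * pdxi k (b j) p
        = ∑ i, ∑ j, π k j p.1 * a i p * pdxi i (b j) p := by
      refine Finset.sum_congr rfl fun i _ => ?_
      calc ∑ j, π i j p.1 * a i p * pdxi k (b j) p
          = a i p * ∑ j, π i j p.1 * pdxi k (b j) p := by
            rw [Finset.mul_sum]; exact Finset.sum_congr rfl fun j _ => by ring
        _ = a i p * ∑ j, π k j p.1 * pdxi i (b j) p := by rw [hGkey i]
        _ = ∑ j, π k j p.1 * a i p * pdxi i (b j) p := by
            rw [Finset.mul_sum]; exact Finset.sum_congr rfl fun j _ => by ring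
    have hT1 : ∑ i, ∑ j, π i j p.1 * pdxi k (a i) p * b j p
        = ∑ i, ∑ j, -(π k j p.1 * b i p * pdxi i (a j) p) := by
      rw [Finset.sum_comm]
      refine Finset.sum_congr rfl fun j _ => ?_
      calc ∑ i, π i j p.1 * pdxi k (a i) p * b j p
          = b j p * -∑ i, π j i p.1 * pdxi k (a i) p := by
            rw [← Finset.sum_neg_distrib, Finset.mul_sum]
            refine Finset.sum_congr rfl fun i _ => ?_
            rw [hanti i j p.1]; ring
        _ = b j p * -∑ i, π k i p.1 * pdxi j (a i) p := by rw [hFkey j]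
        _ = ∑ i, -(π k i p.1 * b j p * pdxi j (a i) p) := by
            rw [← Finset.sum_neg_distrib, Finset.mul_sum]
            exact Finset.sum_congr rfl fun i _ => by ring
    rw [hT1, hT2]
    calc (∑ i, ∑ j, -(π k j p.1 * b i p * pdxi i (a j) p))
          + ∑ i, ∑ j, π k j p.1 * a i p * pdxi i (b j) p
        = ∑ i, ∑ j, (π k j p.1 * a i p * pdxi i (b j) p
            - π k j p.1 * b i p * pdxi i (a j) p) := by
          rw [← Finset.sum_add_distrib]
          refine Finset.sum_congr rfl fun i _ => ?_
          rw [← Finset.sum_add_distrib]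
          exact Finset.sum_congr rfl fun j _ => by ring
      _ = ∑ j, π k j p.1 * ∑ i, (a i p * pdxi i (b j) p - b i p * pdxi i (a j) p) := by
          rw [Finset.sum_comm]
          refine Finset.sum_congr rfl fun j _ => ?_
          rw [Finset.mul_sum]
          exact Finset.sum_congr rfl fun i _ => by ring
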